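/- For every G-invariant regular premeasure μ on the algebra generated by the open sets of X, the function D_μ on W(X,G) defined by D_μ([(f_1,...,f_n)]) = Σ_{i=1}^n μ(supp(f_i)) is a well-defined lower semi-continuous state on W(X,G). -/

import Mathlib

open scoped Pointwise NNReal ENNReal

variable {X : Type*} [TopologicalSpace X] {G : Type*} [Group G] [MulAction G X]

/-- The open support of a continuous `ℝ≥0`-valued function. -/
def osupp (f : C(X, ℝ≥0)) : Set X := {x | f x ≠ 0}

/-- Dynamical subequivalence `A ≼ B` for two finite tuples (lists) of subsets of `X`. -/
def SetSubeq (G : Type*) [Group G] [MulAction G X] (A B : List (Set X)) : Prop :=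
  ∀ F : Fin A.length → Set X,
    (∀ i, IsClosed (F i) ∧ F i ⊆ A.get i) →
    ∃ (J : Fin A.length → ℕ)
      (U : (i : Fin A.length) → Fin (J i) → Set X)
      (s : (i : Fin A.length) → Fin (J i) → G)
      (k : (i : Fin A.length) → Fin (J i) → Fin B.length),
      (∀ i j, IsOpen (U i j)) ∧
      (∀ i, F i ⊆ ⋃ j, U i j) ∧
      (∀ i j, (s i j) • U i j ⊆ B.get (k i j)) ∧
      (∀ (p q : Σ i : Fin A.length, Fin (J i)), p ≠ q → k p.1 p.2 = k q.1 q.2 →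
        Disjoint ((s p.1 p.2) • U p.1 p.2) ((s q.1 q.2) • U q.1 q.2))

/-- Dynamical subequivalence `a ≼ b` for tuples of nonnegative continuous functions. -/
def DynSubeq (G : Type*) [Group G] [MulAction G X] (a b : List C(X, ℝ≥0)) : Prop :=
  SetSubeq G (a.map osupp) (b.map osupp)

/-- The entrywise cut-down `(f - ε)₊`. -/
noncomputable def cutFun (f : C(X, ℝ≥0)) (ε : ℝ≥0) : C(X, ℝ≥0) :=
  ⟨fun x => f x - ε, f.continuous.sub continuous_const⟩

noncomputable def cutList (a : List C(X, ℝ≥0)) (ε : ℝ≥0) : List C(X, ℝ≥0) := a.map (cutFun · ε)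

/-- Membership in the algebra of sets generated by the open sets of `X`. -/
def InAlg (X : Type*) [TopologicalSpace X] (s : Set X) : Prop :=
  s ∈ MeasureTheory.generateSetAlgebra {t : Set X | IsOpen t}

/-- A `G`-invariant regular premeasure on the algebra generated by the open sets. -/
structure InvRegPremeasure (X : Type*) [TopologicalSpace X] (G : Type*) [Group G]
    [MulAction G X] where
  m : Set X → ℝ≥0∞
  junk : ∀ s : Set X, ¬ InAlg X s → m s = 0
  empty' : m ∅ = 0
  countably_additive : ∀ A : ℕ → Set X, (∀ n, InAlg X (A n)) →
    Pairwise (Function.onFun Disjoint A) → InAlg X (⋃ n, A n) →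
    m (⋃ n, A n) = ∑' n, m (A n)
  invariant : ∀ (g : G) (s : Set X), InAlg X s → m (g • s) = m s
  inner_regular : ∀ s : Set X, InAlg X s →
    m s = ⨆ (F : Set X) (_ : IsCompact F ∧ F ⊆ s), m F
  outer_regular : ∀ s : Set X, InAlg X s →
    m s = ⨅ (O : Set X) (_ : IsOpen O ∧ s ⊆ O), m O

/-- A state on the generalized type semigroup `W(X, G)`, described at the level of
`K(X, G)`: a function on tuples which is monotone for `≼`, additive for concatenation,
and vanishes on the empty tuple. -/
structure DynState (X : Type*) [TopologicalSpace X] (G : Type*) [Group G]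
    [MulAction G X] where
  toFun : List C(X, ℝ≥0) → ℝ≥0∞
  mono : ∀ a b, DynSubeq G a b → toFun a ≤ toFun b
  additive : ∀ a b, toFun (a ++ b) = toFun a + toFun b
  zero' : toFun [] = 0

/-- Lower semicontinuity of a state. -/
def DynState.LSC (D : DynState X G) : Prop :=
  ∀ a, D.toFun a = ⨆ (ε : ℝ≥0) (_ : 0 < ε), D.toFun (cutList a ε)


namespace InAlg

lemma of_isOpen {s : Set X} (h : IsOpen s) : InAlg X s :=
  MeasureTheory.generateSetAlgebra.base s h

lemma empty : InAlg X (∅ : Set X) := MeasureTheory.generateSetAlgebra.empty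

lemma compl {s : Set X} (h : InAlg X s) : InAlg X sᶜ :=
  MeasureTheory.generateSetAlgebra.compl s h

lemma union {s t : Set X} (hs : InAlg X s) (ht : InAlg X t) : InAlg X (s ∪ t) :=
  MeasureTheory.generateSetAlgebra.union s t hs ht

lemma diff {s t : Set X} (hs : InAlg X s) (ht : InAlg X t) : InAlg X (s \ t) :=
  MeasureTheory.isSetAlgebra_generateSetAlgebra.diff_mem hs ht

lemma of_isClosed {s : Set X} (h : IsClosed s) : InAlg X s := by
  have := (of_isOpen (X := X) h.isOpen_compl).compl
  rwa [compl_compl] at this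

lemma biUnion {ι : Type*} (s : Finset ι) {V : ι → Set X} (hV : ∀ i ∈ s, InAlg X (V i)) :
    InAlg X (⋃ i ∈ s, V i) :=
  MeasureTheory.isSetAlgebra_generateSetAlgebra.biUnion_mem s hV

end InAlg

section Topology

lemma isOpen_osupp (f : C(X, ℝ≥0)) : IsOpen (osupp f) := by
  have h : osupp f = {x | f x = 0}ᶜ := by
    ext x; simp [osupp]
  rw [h]
  exact (isClosed_eq f.continuous continuous_const).isOpen_compl

lemma inAlg_osupp (f : C(X, ℝ≥0)) : InAlg X (osupp f) := .of_isOpen (isOpen_osupp f)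

lemma isClosed_level (f : C(X, ℝ≥0)) (c : ℝ≥0) : IsClosed {x | c ≤ f x} :=
  isClosed_le continuous_const f.continuous

lemma isOpen_strict_level (f : C(X, ℝ≥0)) (c : ℝ≥0) : IsOpen {x | c < f x} :=
  isOpen_lt continuous_const f.continuous

lemma isOpen_smul_set (hG : ∀ g : G, Continuous fun x : X => g • x) (g : G)
    {U : Set X} (hU : IsOpen U) : IsOpen (g • U) := by
  have h : g • U = (fun x : X => g⁻¹ • x) ⁻¹' U := by
    ext x
    simp [Set.mem_smul_set_iff_inv_smul_mem]
  rw [h]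
  exact hU.preimage (hG g⁻¹)

lemma osupp_cutFun (f : C(X, ℝ≥0)) (ε : ℝ≥0) : osupp (cutFun f ε) = {x | ε < f x} := by
  ext x
  simp [osupp, cutFun, tsub_eq_zero_iff_le, not_le]

lemma get_map_osupp (a : List C(X, ℝ≥0)) (i : Fin (a.map osupp).length) :
    (a.map osupp).get i = osupp (a.get (Fin.cast (List.length_map osupp) i)) := by
  simp [List.get_eq_getElem, List.getElem_map]

end Topology

namespace InvRegPremeasure

variable (μ : InvRegPremeasure X G)

lemma m_union {s t : Set X} (hs : InAlg X s) (ht : InAlg X t) (hd : Disjoint s t) :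
    μ.m (s ∪ t) = μ.m s + μ.m t := by
  classical
  set A : ℕ → Set X := fun n => if n = 0 then s else if n = 1 then t else ∅ with hA
  have hU : (⋃ n, A n) = s ∪ t := by
    apply subset_antisymm
    · refine Set.iUnion_subset fun n => ?_
      rcases n with _ | _ | n <;> simp [A]
    · intro x hx
      rcases hx with hx | hx
      · exact Set.mem_iUnion.2 ⟨0, by simpa [A] using hx⟩
      · exact Set.mem_iUnion.2 ⟨1, by simpa [A] using hx⟩
  have hmem : ∀ n, InAlg X (A n) := by
    intro n
    rcases n with _ | _ | n <;> simpa [A] using by first | exact hs | exact ht | exact InAlg.empty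
  have hpd : Pairwise (Function.onFun Disjoint A) := by
    intro m n hmn
    rcases m with _ | _ | m <;> rcases n with _ | _ | n <;>
      simp_all [Function.onFun, A, hd, hd.symm]
  have hts : ∑' n, μ.m (A n) = μ.m s + μ.m t := by
    rw [tsum_eq_sum (s := ({0, 1} : Finset ℕ)) ?_]
    · rw [Finset.sum_pair (by norm_num)]
      simp [A]
    · intro n hn
      rcases n with _ | _ | n
      · simp at hn
      · simp at hn
      · simp [A, μ.empty']
  have hca := μ.countably_additive A hmem hpd (by rw [hU]; exact hs.union ht)
  rw [hU] at hca
  rw [hca, hts]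

lemma m_mono {s t : Set X} (hs : InAlg X s) (ht : InAlg X t) (hst : s ⊆ t) :
    μ.m s ≤ μ.m t := by
  have h : μ.m t = μ.m s + μ.m (t \ s) := by
    rw [← μ.m_union hs (ht.diff hs) Set.disjoint_sdiff_right, Set.union_diff_cancel hst]
  rw [h]
  exact le_self_add

lemma m_union_le {s t : Set X} (hs : InAlg X s) (ht : InAlg X t) :
    μ.m (s ∪ t) ≤ μ.m s + μ.m t := by
  rw [← Set.union_diff_self, μ.m_union hs (ht.diff hs) Set.disjoint_sdiff_right]
  exact add_le_add_right (μ.m_mono (ht.diff hs) ht Set.diff_subset) _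

lemma m_biUnion_le {ι : Type*} (s : Finset ι) {V : ι → Set X}
    (hV : ∀ i ∈ s, InAlg X (V i)) :
    μ.m (⋃ i ∈ s, V i) ≤ ∑ i ∈ s, μ.m (V i) := by
  classical
  induction s using Finset.induction with
  | empty => simp [μ.empty']
  | @insert a s ha ih =>
    rw [Finset.set_biUnion_insert, Finset.sum_insert ha]
    calc μ.m (V a ∪ ⋃ i ∈ s, V i) ≤ μ.m (V a) + μ.m (⋃ i ∈ s, V i) :=
          μ.m_union_le (hV a (Finset.mem_insert_self a s))
            (InAlg.biUnion s fun i hi => hV i (Finset.mem_insert_of_mem hi))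
      _ ≤ μ.m (V a) + ∑ i ∈ s, μ.m (V i) :=
          add_le_add_right (ih fun i hi => hV i (Finset.mem_insert_of_mem hi)) _

lemma m_biUnion_eq {ι : Type*} (s : Finset ι) {V : ι → Set X}
    (hV : ∀ i ∈ s, InAlg X (V i))
    (hd : (s : Set ι).Pairwise (Function.onFun Disjoint V)) :
    μ.m (⋃ i ∈ s, V i) = ∑ i ∈ s, μ.m (V i) := by
  classical
  induction s using Finset.induction with
  | empty => simp [μ.empty']
  | @insert a s ha ih =>
    rw [Finset.set_biUnion_insert, Finset.sum_insert ha]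
    have hdis : Disjoint (V a) (⋃ i ∈ s, V i) := by
      rw [Set.disjoint_iUnion_right]
      intro i
      rw [Set.disjoint_iUnion_right]
      intro hi
      exact hd (Finset.mem_insert_self a s) (Finset.mem_insert_of_mem hi)
        (fun h => ha (h ▸ hi))
    rw [μ.m_union (hV a (Finset.mem_insert_self a s))
        (InAlg.biUnion s fun i hi => hV i (Finset.mem_insert_of_mem hi)) hdis,
      ih (fun i hi => hV i (Finset.mem_insert_of_mem hi))
        (hd.mono (by simp [Finset.coe_insert, Set.subset_insert]))]

lemma level_mono (f : C(X, ℝ≥0)) : Monotone fun n : ℕ => μ.m {x | ((n : ℝ≥0) + 1)⁻¹ ≤ f x} := by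
  intro n m hnm
  refine μ.m_mono (.of_isClosed (isClosed_level f _)) (.of_isClosed (isClosed_level f _)) ?_
  intro x hx
  simp only [Set.mem_setOf_eq] at hx ⊢
  refine le_trans ?_ hx
  gcongr

lemma m_osupp_eq [CompactSpace X] [T2Space X] (f : C(X, ℝ≥0)) :
    μ.m (osupp f) = ⨆ n : ℕ, μ.m {x | ((n : ℝ≥0) + 1)⁻¹ ≤ f x} := by
  apply le_antisymm
  · rw [μ.inner_regular _ (inAlg_osupp f)]
    refine iSup₂_le fun F hF => ?_
    obtain ⟨hFc, hFs⟩ := hF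
    have hcover : F ⊆ ⋃ n : ℕ, {x | ((n : ℝ≥0) + 1)⁻¹ < f x} := by
      intro x hx
      have hfx : 0 < f x := pos_iff_ne_zero.2 (hFs hx)
      obtain ⟨n, hn⟩ := exists_nat_one_div_lt hfx
      rw [one_div] at hn
      exact Set.mem_iUnion.2 ⟨n, hn⟩
    have hdir : Directed (· ⊆ ·) fun n : ℕ => {x | ((n : ℝ≥0) + 1)⁻¹ < f x} := by
      refine Monotone.directed_le fun n m hnm x hx => ?_
      simp only [Set.mem_setOf_eq] at hx ⊢
      refine lt_of_le_of_lt ?_ hx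
      gcongr
    obtain ⟨n, hn⟩ := hFc.elim_directed_cover _ (fun n => isOpen_strict_level f _) hcover hdir
    refine le_trans ?_ (le_iSup _ n)
    exact μ.m_mono (.of_isClosed hFc.isClosed) (.of_isClosed (isClosed_level f _))
      fun x hx => show ((n : ℝ≥0) + 1)⁻¹ ≤ f x from le_of_lt (hn hx)
  · refine iSup_le fun n => ?_
    refine μ.m_mono (.of_isClosed (isClosed_level f _)) (inAlg_osupp f) fun x hx => ?_
    have h1 : (0 : ℝ≥0) < ((n : ℝ≥0) + 1)⁻¹ := by positivity
    exact (lt_of_lt_of_le h1 hx).ne'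

lemma mono_key [CompactSpace X] [T2Space X]
    (hG : ∀ g : G, Continuous fun x : X => g • x) (μ : InvRegPremeasure X G)
    {a b : List C(X, ℝ≥0)} (h : DynSubeq G a b) :
    ∑ i : Fin a.length, μ.m (osupp (a.get i)) ≤ ∑ i : Fin b.length, μ.m (osupp (b.get i)) := by
  classical
  have key : ∀ n : ℕ, (∑ i : Fin a.length, μ.m {x | ((n : ℝ≥0) + 1)⁻¹ ≤ a.get i x})
      ≤ ∑ i : Fin b.length, μ.m (osupp (b.get i)) := by
    intro n
    set c : ℝ≥0 := ((n : ℝ≥0) + 1)⁻¹ with hc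
    have hcpos : (0 : ℝ≥0) < c := by positivity
    have hA : (a.map osupp).length = a.length := List.length_map osupp
    have hB : (b.map osupp).length = b.length := List.length_map osupp
    set F : Fin (a.map osupp).length → Set X :=
      fun i => {x | c ≤ a.get (Fin.cast hA i) x} with hFdef
    have hFhyp : ∀ i, IsClosed (F i) ∧ F i ⊆ (a.map osupp).get i := by
      intro i
      refine ⟨isClosed_level _ _, ?_⟩
      rw [get_map_osupp]
      intro x hx
      have hx' : c ≤ a.get (Fin.cast hA i) x := hx
      exact (lt_of_lt_of_le hcpos hx').ne'
    obtain ⟨J, U, s, k, hUo, hFU, hsub, hdisj⟩ := h F hFhyp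
    set V : (Σ i : Fin (a.map osupp).length, Fin (J i)) → Set X :=
      fun p => s p.1 p.2 • U p.1 p.2 with hVdef
    have hVopen : ∀ p, IsOpen (V p) := fun p => isOpen_smul_set hG _ (hUo p.1 p.2)
    calc (∑ i : Fin a.length, μ.m {x | c ≤ a.get i x})
        = ∑ i : Fin (a.map osupp).length, μ.m (F i) :=
          (Fintype.sum_equiv (finCongr hA) _ _ fun i => rfl).symm
      _ ≤ ∑ i : Fin (a.map osupp).length, ∑ j : Fin (J i), μ.m (V ⟨i, j⟩) := by
          refine Finset.sum_le_sum fun i _ => ?_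
          have h1 : μ.m (F i) ≤ μ.m (⋃ j ∈ Finset.univ, U i j) := by
            refine μ.m_mono (.of_isClosed (isClosed_level _ _))
              (InAlg.biUnion _ fun j _ => .of_isOpen (hUo i j)) ?_
            have : (⋃ j ∈ Finset.univ, U i j) = ⋃ j, U i j := by simp
            rw [this]
            exact hFU i
          refine h1.trans ((μ.m_biUnion_le _ fun j _ => .of_isOpen (hUo i j)).trans ?_)
          refine le_of_eq (Finset.sum_congr rfl fun j _ => ?_)
          exact (μ.invariant (s i j) (U i j) (.of_isOpen (hUo i j))).symm
      _ = ∑ p : (Σ i : Fin (a.map osupp).length, Fin (J i)), μ.m (V p) := by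
          rw [← Finset.univ_sigma_univ, Finset.sum_sigma]
      _ = ∑ l : Fin (b.map osupp).length,
            ∑ p ∈ Finset.univ.filter (fun p : (Σ i : Fin (a.map osupp).length, Fin (J i)) =>
              k p.1 p.2 = l), μ.m (V p) :=
          (Finset.sum_fiberwise _ _ _).symm
      _ ≤ ∑ l : Fin (b.map osupp).length, μ.m ((b.map osupp).get l) := by
          refine Finset.sum_le_sum fun l _ => ?_
          have heq : (∑ p ∈ Finset.univ.filter
              (fun p : (Σ i : Fin (a.map osupp).length, Fin (J i)) => k p.1 p.2 = l),
              μ.m (V p)) = μ.m (⋃ p ∈ Finset.univ.filter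
              (fun p : (Σ i : Fin (a.map osupp).length, Fin (J i)) => k p.1 p.2 = l), V p) := by
            refine (μ.m_biUnion_eq _ (fun p _ => .of_isOpen (hVopen p)) ?_).symm
            intro p hp q hq hpq
            simp only [Finset.coe_filter, Set.mem_setOf_eq, Finset.mem_univ, true_and] at hp hq
            exact hdisj p q hpq (hp.trans hq.symm)
          rw [heq]
          refine μ.m_mono ?_ ?_ ?_
          · exact InAlg.biUnion _ fun p _ => .of_isOpen (hVopen p)
          · rw [get_map_osupp]
            exact inAlg_osupp _
          · refine Set.iUnion₂_subset fun p hp => ?_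
            simp only [Finset.mem_filter, Finset.mem_univ, true_and] at hp
            rw [← hp]
            exact hsub p.1 p.2
      _ = ∑ i : Fin b.length, μ.m (osupp (b.get i)) := by
          refine Fintype.sum_equiv (finCongr hB) _ _ fun l => ?_
          rw [get_map_osupp]
          rfl
  calc (∑ i : Fin a.length, μ.m (osupp (a.get i)))
      = ∑ i : Fin a.length, ⨆ n : ℕ, μ.m {x | ((n : ℝ≥0) + 1)⁻¹ ≤ a.get i x} :=
        Finset.sum_congr rfl fun i _ => μ.m_osupp_eq _
    _ = ⨆ n : ℕ, ∑ i : Fin a.length, μ.m {x | ((n : ℝ≥0) + 1)⁻¹ ≤ a.get i x} :=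
        ENNReal.finsetSum_iSup_of_monotone fun i => μ.level_mono _
    _ ≤ _ := iSup_le key

lemma sum_cutList (a : List C(X, ℝ≥0)) (ε : ℝ≥0) :
    (∑ i : Fin (cutList a ε).length, μ.m (osupp ((cutList a ε).get i)))
      = ∑ i : Fin a.length, μ.m {x | ε < a.get i x} := by
  have hL : (cutList a ε).length = a.length := List.length_map _
  refine Fintype.sum_equiv (finCongr hL) _ _ fun i => ?_
  have hget : (cutList a ε).get i = cutFun (a.get (Fin.cast hL i)) ε := by
    rw [List.get_eq_getElem]
    simp [cutList, List.get_eq_getElem, List.getElem_map]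
    rfl
  rw [hget, osupp_cutFun]
  rfl

lemma sum_fin_eq_list_sum (a : List C(X, ℝ≥0)) :
    (∑ i : Fin a.length, μ.m (osupp (a.get i))) = (a.map fun f => μ.m (osupp f)).sum := by
  induction a with
  | nil => simp
  | cons f t ih =>
    rw [List.map_cons, List.sum_cons, ← ih]
    exact Fin.sum_univ_succ _

end InvRegPremeasure

/-- **Proposition 3.5.** Every `G`-invariant regular premeasure `μ` induces a well-defined
lower semi-continuous state `D_μ` on `W(X, G)` with
`D_μ([(f₁, …, fₙ)]) = Σᵢ μ(supp fᵢ)`. -/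
theorem state_of_premeasure {X : Type*} [TopologicalSpace X] [CompactSpace X]
    [T2Space X] [TopologicalSpace.MetrizableSpace X]
    {G : Type*} [Group G] [MulAction G X]
    (hG : ∀ g : G, Continuous fun x : X => g • x)
    (μ : InvRegPremeasure X G) :
    ∃ D : DynState X G,
      (∀ a : List C(X, ℝ≥0),
        D.toFun a = ∑ i : Fin a.length, μ.m (osupp (a.get i))) ∧
      D.LSC := by
  classical
  refine ⟨⟨fun a => ∑ i : Fin a.length, μ.m (osupp (a.get i)), ?_, ?_, ?_⟩, fun a => rfl, ?_⟩
  · intro a b hab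
    exact InvRegPremeasure.mono_key hG μ hab
  · intro a b
    rw [InvRegPremeasure.sum_fin_eq_list_sum, InvRegPremeasure.sum_fin_eq_list_sum,
      InvRegPremeasure.sum_fin_eq_list_sum, List.map_append, List.sum_append]
  · simp
  · intro a
    show (∑ i : Fin a.length, μ.m (osupp (a.get i)))
      = ⨆ (ε : ℝ≥0) (_ : 0 < ε),
          ∑ i : Fin (cutList a ε).length, μ.m (osupp ((cutList a ε).get i))
    apply le_antisymm
    · calc (∑ i : Fin a.length, μ.m (osupp (a.get i)))
          = ⨆ n : ℕ, ∑ i : Fin a.length, μ.m {x | ((n : ℝ≥0) + 1)⁻¹ ≤ a.get i x} := by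
            rw [← ENNReal.finsetSum_iSup_of_monotone fun i => μ.level_mono _]
            exact Finset.sum_congr rfl fun i _ => μ.m_osupp_eq _
        _ ≤ _ := by
            refine iSup_le fun n => ?_
            have hε : (0 : ℝ≥0) < ((n : ℝ≥0) + 2)⁻¹ := by positivity
            refine le_trans ?_ (le_iSup₂ (f := fun (ε : ℝ≥0) (_ : 0 < ε) =>
              ∑ i : Fin (cutList a ε).length, μ.m (osupp ((cutList a ε).get i)))
              ((n : ℝ≥0) + 2)⁻¹ hε)
            rw [μ.sum_cutList]
            refine Finset.sum_le_sum fun i _ => ?_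
            refine μ.m_mono (.of_isClosed (isClosed_level _ _))
              (.of_isOpen (isOpen_strict_level _ _)) ?_
            intro x hx
            have hx' : ((n : ℝ≥0) + 1)⁻¹ ≤ a.get i x := hx
            have hlt : ((n : ℝ≥0) + 2)⁻¹ < ((n : ℝ≥0) + 1)⁻¹ := by
              gcongr
              norm_num
            exact lt_of_lt_of_le hlt hx'
    · refine iSup₂_le fun ε hε => ?_
      rw [μ.sum_cutList]
      refine Finset.sum_le_sum fun i _ => ?_
      refine μ.m_mono (.of_isOpen (isOpen_strict_level _ _)) (inAlg_osupp _) ?_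
      intro x hx
      have hx' : ε < a.get i x := hx
      exact (lt_of_le_of_lt (zero_le : 0 ≤ ε) hx').ne'
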